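/- For all nonnegative integers n, the sum over k from 0 to floor(n/2) of [n+k choose k]_{q^2} * [n+1 choose 2k+1]_q * q^{C(n-2k, 2)} equals [2n choose n]_q, as an identity of polynomials in q. -/

import Mathlib

open Finset

/-- The Gaussian (q-)binomial coefficient `[a choose b]_q`, defined as
`∏_{i=1}^{b} (1 - q^(a-i+1)) / (1 - q^i)` (which is `0` when `b > a`). -/
noncomputable def qbinom (q : RatFunc ℚ) (a b : ℕ) : RatFunc ℚ :=
  ∏ i ∈ Finset.range b, (1 - q ^ ((a : ℤ) - i)) / (1 - q ^ ((i : ℤ) + 1))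

namespace QSun

abbrev K := RatFunc ℚ

noncomputable def Np (p : K) (a b : ℕ) : K := ∏ i ∈ Finset.range b, (1 - p ^ ((a : ℤ) - i))
noncomputable def Dp (p : K) (b : ℕ) : K := ∏ i ∈ Finset.range b, (1 - p ^ ((i : ℤ) + 1))

lemma qbinom_eq (p : K) (a b : ℕ) : qbinom p a b = Np p a b / Dp p b := by
  rw [qbinom, Np, Dp, ← Finset.prod_div_distrib]

lemma X_pow_ne_one (m : ℕ) (hm : m ≠ 0) : (RatFunc.X : K) ^ m ≠ 1 := by
  intro h
  have h1 : (algebraMap (Polynomial ℚ) K) (Polynomial.X ^ m) = algebraMap (Polynomial ℚ) K 1 := by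
    simpa [map_pow, RatFunc.algebraMap_X] using h
  have h2 := RatFunc.algebraMap_injective ℚ h1
  have := congrArg Polynomial.natDegree h2
  simp [Polynomial.natDegree_X_pow] at this
  exact hm this

lemma one_sub_X_zpow_ne (z : ℤ) (hz : 1 ≤ z) : (1 : K) - RatFunc.X ^ z ≠ 0 := by
  obtain ⟨m, rfl⟩ : ∃ m : ℕ, z = (m : ℤ) := ⟨z.toNat, (Int.toNat_of_nonneg (by omega)).symm⟩
  rw [zpow_natCast]
  exact sub_ne_zero_of_ne fun h => X_pow_ne_one m (by omega) h.symm

lemma one_sub_X_pow_ne (m : ℕ) (hm : m ≠ 0) : (1 : K) - RatFunc.X ^ m ≠ 0 :=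
  sub_ne_zero_of_ne fun h => X_pow_ne_one m hm h.symm

lemma X2_zpow (z : ℤ) : ((RatFunc.X : K) ^ 2) ^ z = RatFunc.X ^ (2 * z) := by
  rw [← zpow_natCast (RatFunc.X : K) 2, ← zpow_mul]
  norm_num

lemma Dp_X_ne (b : ℕ) : Dp RatFunc.X b ≠ 0 := by
  rw [Dp]
  exact Finset.prod_ne_zero_iff.2 fun i _ => one_sub_X_zpow_ne _ (by omega)

lemma Dp_X2_ne (b : ℕ) : Dp (RatFunc.X ^ 2) b ≠ 0 := by
  rw [Dp]
  refine Finset.prod_ne_zero_iff.2 fun i _ => ?_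
  rw [X2_zpow]
  exact one_sub_X_zpow_ne _ (by omega)

lemma Np_succ_right (p : K) (a b : ℕ) :
    Np p a (b + 1) = Np p a b * (1 - p ^ ((a : ℤ) - b)) := Finset.prod_range_succ _ _

lemma Dp_succ (p : K) (b : ℕ) :
    Dp p (b + 1) = Dp p b * (1 - p ^ ((b : ℤ) + 1)) := Finset.prod_range_succ _ _

lemma Np_succ_succ (p : K) (a b : ℕ) :
    Np p (a + 1) (b + 1) = (1 - p ^ ((a : ℤ) + 1)) * Np p a b := by
  rw [Np, Finset.prod_range_succ', Np, mul_comm]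
  have h1 : ((a + 1 : ℕ) : ℤ) - (0 : ℕ) = (a : ℤ) + 1 := by push_cast; ring
  rw [h1]
  congr 1
  apply Finset.prod_congr rfl
  intro i _
  have h2 : ((a + 1 : ℕ) : ℤ) - (↑(i + 1) : ℤ) = (a : ℤ) - i := by push_cast; ring
  rw [h2]

lemma Np_shift (p : K) (a b : ℕ) (h : (1 : K) - p ^ ((a : ℤ) + 1 - b) ≠ 0) :
    Np p (a + 1) b = (1 - p ^ ((a : ℤ) + 1)) * Np p a b / (1 - p ^ ((a : ℤ) + 1 - b)) := by
  rw [eq_div_iff h, ← Np_succ_succ]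
  rw [Np_succ_right]
  have h2 : ((a + 1 : ℕ) : ℤ) - (b : ℤ) = (a : ℤ) + 1 - b := by push_cast; ring
  rw [h2]

lemma qbinom_zero (p : K) (a b : ℕ) (h : a < b) : qbinom p a b = 0 := by
  rw [qbinom]
  apply Finset.prod_eq_zero (Finset.mem_range.2 h)
  simp


/-- ratio lemmas at qbinom level -/
lemma R1 (p : K) (a b : ℕ) (h : (1 : K) - p ^ ((a : ℤ) + 1 - b) ≠ 0) :
    qbinom p (a + 1) b = (1 - p ^ ((a : ℤ) + 1)) * qbinom p a b / (1 - p ^ ((a : ℤ) + 1 - b)) := by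
  rw [qbinom_eq, qbinom_eq, Np_shift p a b h, div_div,
    mul_comm (1 - p ^ ((a : ℤ) + 1 - (b : ℤ))) (Dp p b), ← div_div, mul_div_assoc]

lemma R2 (p : K) (a b : ℕ) :
    qbinom p a (b + 1) = qbinom p a b * ((1 - p ^ ((a : ℤ) - b)) / (1 - p ^ ((b : ℤ) + 1))) := by
  rw [qbinom_eq, qbinom_eq, Np_succ_right, Dp_succ, div_mul_div_comm]

lemma R3 (p : K) (a b : ℕ) :
    qbinom p (a + 1) (b + 1) = (1 - p ^ ((a : ℤ) + 1)) * qbinom p a b / (1 - p ^ ((b : ℤ) + 1)) := by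
  rw [qbinom_eq, qbinom_eq, Np_succ_succ, Dp_succ, ← div_div, mul_div_assoc]

noncomputable def Fn (n k : ℕ) : K :=
  qbinom (RatFunc.X ^ 2) (n + k) k * qbinom RatFunc.X (n + 1) (2 * k + 1) *
    RatFunc.X ^ ((n - 2 * k).choose 2)

noncomputable def En (n k : ℕ) : ℤ :=
  2 * n + 1 - 4 * k + (if 2 * k ≤ n then ((n - 2 * k).choose 2 : ℤ) else 1)

noncomputable def Hn (n k : ℕ) : K :=
  -((1 - RatFunc.X ^ (2 * k)) ^ 2 * (1 - RatFunc.X ^ (3 * n + 3)) *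
    qbinom (RatFunc.X ^ 2) (n + k) k * qbinom RatFunc.X (n + 1) (2 * k) *
    RatFunc.X ^ (En n k))

lemma choose_two_succ (m : ℕ) : (m + 1).choose 2 = m.choose 2 + m := by
  rw [Nat.choose_succ_succ m 1, Nat.choose_one_right]
  exact Nat.add_comm _ _

lemma key_main (n k j : ℕ) (hn : n = 2 * k + j + 1) :
    (1 - RatFunc.X ^ (n + 1)) ^ 2 * (1 - RatFunc.X ^ (2 * n + 2)) * Fn (n + 1) k -
      (1 - RatFunc.X ^ (2 * n + 1)) * (1 - RatFunc.X ^ (2 * n + 2)) ^ 2 * Fn n k =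
    Hn n (k + 1) - Hn n k := by
  subst hn
  have hX : (RatFunc.X : K) ≠ 0 := RatFunc.X_ne_zero
  -- En values
  have e1 : En (2 * k + j + 1) k = (((j + 1).choose 2 + (2 * j + 3) : ℕ) : ℤ) := by
    rw [En, if_pos (by omega), show 2 * k + j + 1 - 2 * k = j + 1 from by omega]
    push_cast; ring
  have e2 : En (2 * k + j + 1) (k + 1) = (((j + 1).choose 2 : ℕ) : ℤ) := by
    rcases j with _ | j'
    · rw [En, if_neg (by omega)]; norm_num; ring
    · rw [En, if_pos (by omega),
        show 2 * k + (j' + 1) + 1 - 2 * (k + 1) = j' from by omega,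
        show (j' + 1 + 1).choose 2 = j'.choose 2 + (2 * j' + 1) from by
          rw [choose_two_succ, choose_two_succ]; ring]
      push_cast; ring
  rw [Fn, Fn, Hn, Hn, e1, e2, zpow_natCast, zpow_natCast]
  rw [show 2*k+j+1+1+k = 2*k+j+1+k+1 from by ring,
      show 2*k+j+1+(k+1) = 2*k+j+1+k+1 from by ring,
      show 2*k+j+1+1-2*k = j+2 from by omega,
      show 2*k+j+1-2*k = j+1 from by omega,
      choose_two_succ (j+1)]
  rw [R3 (RatFunc.X^2) (2*k+j+1+k) k]
  rw [R1 (RatFunc.X^2) (2*k+j+1+k) k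
      (by rw [X2_zpow]; apply one_sub_X_zpow_ne; push_cast; omega)]
  rw [R1 RatFunc.X (2*k+j+1+1) (2*k+1)
      (by apply one_sub_X_zpow_ne; push_cast; omega)]
  rw [show 2*(k+1) = 2*k+1+1 from by ring]
  rw [R2 RatFunc.X (2*k+j+1+1) (2*k+1)]
  rw [R2 RatFunc.X (2*k+j+1+1) (2*k)]
  simp only [X2_zpow]
  rw [show (2*(((2*k+j+1+k : ℕ) : ℤ) + 1) : ℤ) = ((6*k+2*j+4 : ℕ) : ℤ) from by push_cast; ring,
      show (2*(((2*k+j+1+k : ℕ) : ℤ) + 1 - ((k : ℕ) : ℤ)) : ℤ) = ((4*k+2*j+4 : ℕ) : ℤ) from by push_cast; ring,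
      show (((2*k+j+1+1 : ℕ) : ℤ) + 1 : ℤ) = ((2*k+j+3 : ℕ) : ℤ) from by push_cast; ring,
      show (((2*k+j+1+1 : ℕ) : ℤ) - ((2*k : ℕ) : ℤ) : ℤ) = ((j+2 : ℕ) : ℤ) from by push_cast; ring,
      show (((2*k : ℕ) : ℤ) + 1 : ℤ) = ((2*k+1 : ℕ) : ℤ) from by push_cast; ring,
      show (((2*k+j+3 : ℕ) : ℤ) - ((2*k+1 : ℕ) : ℤ) : ℤ) = ((j+2 : ℕ) : ℤ) from by push_cast; ring,
      show (2*(((k : ℕ) : ℤ) + 1) : ℤ) = ((2*k+2 : ℕ) : ℤ) from by push_cast; ring,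
      show (((2*k+j+1+1 : ℕ) : ℤ) - ((2*k+1 : ℕ) : ℤ) : ℤ) = ((j+1 : ℕ) : ℤ) from by push_cast; ring,
      show (((2*k+1 : ℕ) : ℤ) + 1 : ℤ) = ((2*k+2 : ℕ) : ℤ) from by push_cast; ring]
  simp only [zpow_natCast]
  have h1 : (1:K) - RatFunc.X ^ (2*k+1) ≠ 0 := one_sub_X_pow_ne _ (by omega)
  have h2 : (1:K) - RatFunc.X ^ (2*k+2) ≠ 0 := one_sub_X_pow_ne _ (by omega)
  have h3 : (1:K) - RatFunc.X ^ (j+2) ≠ 0 := one_sub_X_pow_ne _ (by omega)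
  have h5 : (1:K) - RatFunc.X ^ (4*k+2*j+4) ≠ 0 := one_sub_X_pow_ne _ (by omega)
  field_simp
  ring

lemma key_m0 (n k : ℕ) (hn : n = 2 * k) :
    (1 - RatFunc.X ^ (n + 1)) ^ 2 * (1 - RatFunc.X ^ (2 * n + 2)) * Fn (n + 1) k -
      (1 - RatFunc.X ^ (2 * n + 1)) * (1 - RatFunc.X ^ (2 * n + 2)) ^ 2 * Fn n k =
    Hn n (k + 1) - Hn n k := by
  subst hn
  have hz : Hn (2 * k) (k + 1) = 0 := by
    rw [Hn, qbinom_zero RatFunc.X (2 * k + 1) (2 * (k + 1)) (by omega)]; ring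
  have e1 : En (2 * k) k = ((1 : ℕ) : ℤ) := by
    rw [En, if_pos (by omega), show 2 * k - 2 * k = 0 from by omega]
    norm_num; ring
  rw [hz, Fn, Fn, Hn, e1, zpow_natCast]
  rw [show 2 * k + 1 + k = 2 * k + k + 1 from by ring,
      show 2 * k + 1 - 2 * k = 1 from by omega,
      show 2 * k - 2 * k = 0 from by omega]
  rw [R1 (RatFunc.X ^ 2) (2 * k + k) k
      (by rw [X2_zpow]; apply one_sub_X_zpow_ne; push_cast; omega)]
  rw [show 2 * k + 1 + 1 = (2 * k + 1) + 1 from rfl,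
      show (2 : ℕ) * k + 1 = 2 * k + 1 from rfl]
  rw [R3 RatFunc.X (2 * k + 1) (2 * k)]
  rw [R2 RatFunc.X (2 * k + 1) (2 * k)]
  simp only [X2_zpow]
  rw [show (2*(((2*k+k : ℕ) : ℤ) + 1) : ℤ) = ((6*k+2 : ℕ) : ℤ) from by push_cast; ring,
      show (2*(((2*k+k : ℕ) : ℤ) + 1 - ((k : ℕ) : ℤ)) : ℤ) = ((4*k+2 : ℕ) : ℤ) from by push_cast; ring,
      show (((2*k+1 : ℕ) : ℤ) + 1 : ℤ) = ((2*k+2 : ℕ) : ℤ) from by push_cast; ring,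
      show (((2*k+1 : ℕ) : ℤ) - ((2*k : ℕ) : ℤ) : ℤ) = ((1 : ℕ) : ℤ) from by push_cast; ring,
      show (((2*k : ℕ) : ℤ) + 1 : ℤ) = ((2*k+1 : ℕ) : ℤ) from by push_cast; ring]
  simp only [zpow_natCast]
  have h1 : (1:K) - RatFunc.X ^ (2*k+1) ≠ 0 := one_sub_X_pow_ne _ (by omega)
  have h5 : (1:K) - RatFunc.X ^ (4*k+2) ≠ 0 := one_sub_X_pow_ne _ (by omega)
  simp only [Nat.choose_eq_zero_of_lt (by norm_num : 1 < 2), Nat.choose_eq_zero_of_lt (by norm_num : 0 < 2)]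
  field_simp
  ring

lemma key_m1 (n k : ℕ) (hn : n + 1 = 2 * k) :
    (1 - RatFunc.X ^ (n + 1)) ^ 2 * (1 - RatFunc.X ^ (2 * n + 2)) * Fn (n + 1) k -
      (1 - RatFunc.X ^ (2 * n + 1)) * (1 - RatFunc.X ^ (2 * n + 2)) ^ 2 * Fn n k =
    Hn n (k + 1) - Hn n k := by
  obtain ⟨k', rfl⟩ : ∃ k', k = k' + 1 := ⟨k - 1, by omega⟩
  obtain rfl : n = 2 * k' + 1 := by omega
  have hz : Hn (2 * k' + 1) (k' + 1 + 1) = 0 := by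
    rw [Hn, qbinom_zero RatFunc.X (2 * k' + 1 + 1) (2 * (k' + 1 + 1)) (by omega)]; ring
  have hf : Fn (2 * k' + 1) (k' + 1) = 0 := by
    rw [Fn, qbinom_zero RatFunc.X (2 * k' + 1 + 1) (2 * (k' + 1) + 1) (by omega)]; ring
  have e1 : En (2 * k' + 1) (k' + 1) = ((0 : ℕ) : ℤ) := by
    rw [En, if_neg (by omega)]; push_cast; ring
  rw [hz, hf, Fn, Hn, e1, zpow_natCast]
  rw [show 2 * k' + 1 + 1 + (k' + 1) = 2 * k' + 1 + (k' + 1) + 1 from by ring,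
      show 2 * k' + 1 + 1 - 2 * (k' + 1) = 0 from by omega,
      show 2 * (k' + 1) + 1 = (2 * k' + 2) + 1 from by ring,
      show 2 * k' + 1 + 1 + 1 = (2 * k' + 2) + 1 from by ring,
      show 2 * (k' + 1) = 2 * k' + 2 from by ring]
  rw [R1 (RatFunc.X ^ 2) (2 * k' + 1 + (k' + 1)) (k' + 1)
      (by rw [X2_zpow]; apply one_sub_X_zpow_ne; push_cast; omega)]
  rw [R3 RatFunc.X (2 * k' + 2) (2 * k' + 2)]
  rw [show 2 * k' + 1 + 1 = 2 * k' + 2 from by ring]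
  simp only [X2_zpow]
  rw [show (2*(((2*k'+1+(k'+1) : ℕ) : ℤ) + 1) : ℤ) = ((6*k'+6 : ℕ) : ℤ) from by push_cast; ring,
      show (2*(((2*k'+1+(k'+1) : ℕ) : ℤ) + 1 - ((k'+1 : ℕ) : ℤ)) : ℤ) = ((4*k'+4 : ℕ) : ℤ) from by push_cast; ring,
      show (((2*k'+2 : ℕ) : ℤ) + 1 : ℤ) = ((2*k'+3 : ℕ) : ℤ) from by push_cast; ring]
  simp only [zpow_natCast]
  have h1 : (1:K) - RatFunc.X ^ (2*k'+3) ≠ 0 := one_sub_X_pow_ne _ (by omega)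
  have h5 : (1:K) - RatFunc.X ^ (4*k'+4) ≠ 0 := one_sub_X_pow_ne _ (by omega)
  simp only [Nat.choose_eq_zero_of_lt (by norm_num : 0 < 2)]
  field_simp
  ring

lemma key_far (n k : ℕ) (hn : n + 2 ≤ 2 * k) :
    (1 - RatFunc.X ^ (n + 1)) ^ 2 * (1 - RatFunc.X ^ (2 * n + 2)) * Fn (n + 1) k -
      (1 - RatFunc.X ^ (2 * n + 1)) * (1 - RatFunc.X ^ (2 * n + 2)) ^ 2 * Fn n k =
    Hn n (k + 1) - Hn n k := by
  have f1 : Fn (n + 1) k = 0 := by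
    rw [Fn, qbinom_zero RatFunc.X (n + 1 + 1) (2 * k + 1) (by omega)]; ring
  have f2 : Fn n k = 0 := by
    rw [Fn, qbinom_zero RatFunc.X (n + 1) (2 * k + 1) (by omega)]; ring
  have f3 : Hn n (k + 1) = 0 := by
    rw [Hn, qbinom_zero RatFunc.X (n + 1) (2 * (k + 1)) (by omega)]; ring
  have f4 : Hn n k = 0 := by
    rw [Hn, qbinom_zero RatFunc.X (n + 1) (2 * k) (by omega)]; ring
  rw [f1, f2, f3, f4]; ring

lemma key (n k : ℕ) :
    (1 - RatFunc.X ^ (n + 1)) ^ 2 * (1 - RatFunc.X ^ (2 * n + 2)) * Fn (n + 1) k -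
      (1 - RatFunc.X ^ (2 * n + 1)) * (1 - RatFunc.X ^ (2 * n + 2)) ^ 2 * Fn n k =
    Hn n (k + 1) - Hn n k := by
  by_cases h1 : 2 * k + 1 ≤ n
  · exact key_main n k (n - 2 * k - 1) (by omega)
  by_cases h2 : n = 2 * k
  · exact key_m0 n k h2
  by_cases h3 : n + 1 = 2 * k
  · exact key_m1 n k h3
  · exact key_far n k (by omega)

lemma Fn_zero (n k : ℕ) (h : n + 1 ≤ 2 * k) : Fn n k = 0 := by
  rw [Fn, qbinom_zero RatFunc.X (n + 1) (2 * k + 1) (by omega)]; ring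

lemma Hn_zero_left (n : ℕ) : Hn n 0 = 0 := by
  simp [Hn]

lemma Hn_zero_right (n : ℕ) : Hn n (n + 2) = 0 := by
  rw [Hn, qbinom_zero RatFunc.X (n + 1) (2 * (n + 2)) (by omega)]; ring

lemma sum_step (n : ℕ) :
    (1 - RatFunc.X ^ (n + 1)) ^ 2 * ∑ k ∈ range (n + 2), Fn (n + 1) k =
      (1 - RatFunc.X ^ (2 * n + 1)) * (1 - RatFunc.X ^ (2 * n + 2)) *
        ∑ k ∈ range (n + 2), Fn n k := by
  have h2 : (1 : K) - RatFunc.X ^ (2 * n + 2) ≠ 0 := one_sub_X_pow_ne _ (by omega)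
  apply mul_left_cancel₀ h2
  have hsum : ∑ k ∈ range (n + 2),
      ((1 - RatFunc.X ^ (n + 1)) ^ 2 * (1 - RatFunc.X ^ (2 * n + 2)) * Fn (n + 1) k -
        (1 - RatFunc.X ^ (2 * n + 1)) * (1 - RatFunc.X ^ (2 * n + 2)) ^ 2 * Fn n k) = 0 := by
    rw [Finset.sum_congr rfl (fun k _ => key n k), Finset.sum_range_sub (Hn n),
      Hn_zero_left, Hn_zero_right]
    ring
  rw [Finset.sum_sub_distrib, ← Finset.mul_sum, ← Finset.mul_sum, sub_eq_zero] at hsum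
  linear_combination hsum

lemma qbinom_rec (n : ℕ) :
    (1 - RatFunc.X ^ (n + 1)) ^ 2 * qbinom RatFunc.X (2 * (n + 1)) (n + 1) =
      (1 - RatFunc.X ^ (2 * n + 1)) * (1 - RatFunc.X ^ (2 * n + 2)) *
        qbinom RatFunc.X (2 * n) n := by
  rw [show 2 * (n + 1) = (2 * n + 1) + 1 from by ring]
  rw [R3 RatFunc.X (2 * n + 1) n]
  rw [R1 RatFunc.X (2 * n) n (by apply one_sub_X_zpow_ne; push_cast; omega)]
  rw [show (((2*n+1 : ℕ) : ℤ) + 1 : ℤ) = ((2*n+2 : ℕ) : ℤ) from by push_cast; ring,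
      show (((n : ℕ) : ℤ) + 1 : ℤ) = ((n+1 : ℕ) : ℤ) from by push_cast; ring,
      show (((2*n : ℕ) : ℤ) + 1 - ((n : ℕ) : ℤ) : ℤ) = ((n+1 : ℕ) : ℤ) from by push_cast; ring,
      show (((2*n : ℕ) : ℤ) + 1 : ℤ) = ((2*n+1 : ℕ) : ℤ) from by push_cast; ring]
  simp only [zpow_natCast]
  have h1 : (1:K) - RatFunc.X ^ (n+1) ≠ 0 := one_sub_X_pow_ne _ (by omega)
  field_simp

lemma Sn_eq : ∀ n : ℕ, ∑ k ∈ range (n + 1), Fn n k = qbinom RatFunc.X (2 * n) n := by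
  intro n
  induction n with
  | zero =>
    rw [Finset.sum_range_one, Fn]
    norm_num
    rw [qbinom, qbinom, qbinom, Finset.prod_range_zero, Finset.prod_range_zero,
      Finset.prod_range_one]
    norm_num
    exact (by simpa using one_sub_X_zpow_ne 1 le_rfl)
  | succ n ih =>
    have hrec := sum_step n
    have hext : ∑ k ∈ range (n + 2), Fn n k = ∑ k ∈ range (n + 1), Fn n k := by
      rw [Finset.sum_range_succ, Fn_zero n (n + 1) (by omega), add_zero]
    rw [hext, ih] at hrec
    have h1 : ((1 : K) - RatFunc.X ^ (n + 1)) ^ 2 ≠ 0 :=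
      pow_ne_zero _ (one_sub_X_pow_ne _ (by omega))
    apply mul_left_cancel₀ h1
    rw [show n + 1 + 1 = n + 2 from rfl, hrec, ← qbinom_rec]

end QSun

theorem q_sun_special1 (n : ℕ) :
    ∑ k ∈ range (n / 2 + 1),
      qbinom (RatFunc.X ^ 2) (n + k) k * qbinom RatFunc.X (n + 1) (2 * k + 1) *
        RatFunc.X ^ ((n - 2 * k).choose 2) =
    qbinom RatFunc.X (2 * n) n := by
  show ∑ k ∈ range (n / 2 + 1), QSun.Fn n k = qbinom RatFunc.X (2 * n) n
  rw [Finset.sum_subset (Finset.range_subset_range.2 (by omega : n / 2 + 1 ≤ n + 1))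
    (fun x hx hnx => QSun.Fn_zero n x
      (by simp only [Finset.mem_range] at hx hnx; omega))]
  exact QSun.Sn_eq n
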